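/- arXiv:2507.17237 — 2 statements merged into one kernel-verified Lean document; each statement's English description precedes it below -/
import Mathlib

section
/- The set of absolutely ν-Riemann-Lebesgue integrable functions g: S → X is a linear space, and the integral is linear: ∫(g₁+g₂)dν = ∫g₁dν + ∫g₂dν and ∫(c·g)dν = c·∫g dν for scalars c. -/
/-- Countable (ℕ-indexed) measurable partition of the whole space. -/
def IsCountablePartition {S : Type*} [MeasurableSpace S] (P : ℕ → Set S) : Prop :=
  (∀ n, MeasurableSet (P n)) ∧ Pairwise (Function.onFun Disjoint P) ∧ (⋃ n, P n) = Set.univ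

/-- `Q` is finer than `P`: every set of `Q` is included in some set of `P`. -/
def Finer {S : Type*} (Q P : ℕ → Set S) : Prop := ∀ n, ∃ m, Q n ⊆ P m

/-- `a` is a value of the ν-Riemann–Lebesgue integral of `g` on `S`. -/
def IsRLIntegral {S : Type*} [MeasurableSpace S] {X : Type*} [NormedAddCommGroup X]
    [NormedSpace ℝ X] (ν : Set S → ℝ) (g : S → X) (a : X) : Prop :=
  ∀ ε : ℝ, 0 < ε → ∃ P₀ : ℕ → Set S, IsCountablePartition P₀ ∧
    ∀ P : ℕ → Set S, IsCountablePartition P → Finer P P₀ →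
      (∀ n, 0 < ν (P n) → ∃ M, ∀ x ∈ P n, ‖g x‖ ≤ M) ∧
      ∀ s : ℕ → S, (∀ n, (P n).Nonempty → s n ∈ P n) →
        Summable (fun n => ‖ν (P n) • g (s n)‖) ∧
        ‖(∑' n, ν (P n) • g (s n)) - a‖ < ε

lemma finer_trans {S : Type*} {P Q R : ℕ → Set S} (h1 : Finer P Q) (h2 : Finer Q R) :
    Finer P R := by
  intro n
  obtain ⟨m, hm⟩ := h1 n
  obtain ⟨k, hk⟩ := h2 m
  exact ⟨k, hm.trans hk⟩

lemma common_refinement {S : Type*} [MeasurableSpace S] {P₁ P₂ : ℕ → Set S}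
    (h1 : IsCountablePartition P₁) (h2 : IsCountablePartition P₂) :
    ∃ P : ℕ → Set S, IsCountablePartition P ∧ Finer P P₁ ∧ Finer P P₂ := by
  refine ⟨fun n => P₁ (Nat.unpair n).1 ∩ P₂ (Nat.unpair n).2, ⟨?_, ?_, ?_⟩, ?_, ?_⟩
  · intro n; exact (h1.1 _).inter (h2.1 _)
  · intro n m hnm
    have hu : (Nat.unpair n) ≠ (Nat.unpair m) := by
      intro h
      exact hnm (by rw [← Nat.pair_unpair n, ← Nat.pair_unpair m, h])
    rcases Prod.mk.injEq (Nat.unpair n).1 (Nat.unpair n).2 (Nat.unpair m).1 (Nat.unpair m).2 ▸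
      (fun h => hu h) with _
    by_cases h1' : (Nat.unpair n).1 = (Nat.unpair m).1
    · have h2' : (Nat.unpair n).2 ≠ (Nat.unpair m).2 := by
        intro h; exact hu (Prod.ext h1' h)
      exact Disjoint.mono Set.inter_subset_right Set.inter_subset_right (h2.2.1 h2')
    · exact Disjoint.mono Set.inter_subset_left Set.inter_subset_left (h1.2.1 h1')
  · rw [Set.eq_univ_iff_forall]
    intro x
    have hx1 : x ∈ ⋃ n, P₁ n := h1.2.2 ▸ Set.mem_univ x
    have hx2 : x ∈ ⋃ n, P₂ n := h2.2.2 ▸ Set.mem_univ x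
    obtain ⟨i, hi⟩ := Set.mem_iUnion.1 hx1
    obtain ⟨j, hj⟩ := Set.mem_iUnion.1 hx2
    exact Set.mem_iUnion.2 ⟨Nat.pair i j, by simp [Nat.unpair_pair, hi, hj]⟩
  · intro n; exact ⟨(Nat.unpair n).1, Set.inter_subset_left⟩
  · intro n; exact ⟨(Nat.unpair n).2, Set.inter_subset_right⟩

/-- The absolutely ν-Riemann–Lebesgue integrable functions form a linear space and
the integral is linear. -/
theorem rl_integral_linear {S : Type*} [MeasurableSpace S] [Nonempty S]
    {X : Type*} [NormedAddCommGroup X] [NormedSpace ℝ X] [CompleteSpace X]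
    (ν : Set S → ℝ) (hν0 : ν ∅ = 0) (hνnn : ∀ A, 0 ≤ ν A)
    (g₁ g₂ : S → X) (a₁ a₂ : X) (c : ℝ)
    (h₁ : IsRLIntegral ν g₁ a₁) (h₂ : IsRLIntegral ν g₂ a₂) :
    IsRLIntegral ν (fun s => g₁ s + g₂ s) (a₁ + a₂) ∧
    IsRLIntegral ν (fun s => c • g₁ s) (c • a₁) := by
  constructor
  · -- additivity
    intro ε hε
    obtain ⟨Q₁, hQ₁, hspec₁⟩ := h₁ (ε / 2) (by linarith)
    obtain ⟨Q₂, hQ₂, hspec₂⟩ := h₂ (ε / 2) (by linarith)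
    obtain ⟨P₀, hP₀, hf₁, hf₂⟩ := common_refinement hQ₁ hQ₂
    refine ⟨P₀, hP₀, ?_⟩
    intro P hP hPf
    obtain ⟨hb₁, ht₁⟩ := hspec₁ P hP (finer_trans hPf hf₁)
    obtain ⟨hb₂, ht₂⟩ := hspec₂ P hP (finer_trans hPf hf₂)
    constructor
    · intro n hn
      obtain ⟨M₁, hM₁⟩ := hb₁ n hn
      obtain ⟨M₂, hM₂⟩ := hb₂ n hn
      exact ⟨M₁ + M₂, fun x hx => (norm_add_le _ _).trans (add_le_add (hM₁ x hx) (hM₂ x hx))⟩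
    · intro s hs
      obtain ⟨hS₁, hd₁⟩ := ht₁ s hs
      obtain ⟨hS₂, hd₂⟩ := ht₂ s hs
      have hv₁ : Summable (fun n => ν (P n) • g₁ (s n)) := Summable.of_norm hS₁
      have hv₂ : Summable (fun n => ν (P n) • g₂ (s n)) := Summable.of_norm hS₂
      have heq : (fun n => ν (P n) • (g₁ (s n) + g₂ (s n))) =
          fun n => ν (P n) • g₁ (s n) + ν (P n) • g₂ (s n) := by
        funext n; rw [smul_add]
      constructor
      · show Summable (fun n => ‖ν (P n) • (g₁ (s n) + g₂ (s n))‖)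
        apply Summable.of_nonneg_of_le (fun n => norm_nonneg _)
          (fun n => ?_) (hS₁.add hS₂)
        simp only [smul_add]
        exact norm_add_le _ _
      · show ‖(∑' n, ν (P n) • (g₁ (s n) + g₂ (s n))) - (a₁ + a₂)‖ < ε
        have hts : (∑' n, ν (P n) • (g₁ (s n) + g₂ (s n))) =
            (∑' n, ν (P n) • g₁ (s n)) + (∑' n, ν (P n) • g₂ (s n)) := by
          rw [heq]; exact Summable.tsum_add hv₁ hv₂
        rw [hts]
        calc ‖(∑' n, ν (P n) • g₁ (s n)) + (∑' n, ν (P n) • g₂ (s n)) - (a₁ + a₂)‖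
            = ‖((∑' n, ν (P n) • g₁ (s n)) - a₁) + ((∑' n, ν (P n) • g₂ (s n)) - a₂)‖ := by
              congr 1; abel
          _ ≤ _ := norm_add_le _ _
          _ < ε / 2 + ε / 2 := add_lt_add hd₁ hd₂
          _ = ε := by ring
  · -- scalar multiplication
    intro ε hε
    by_cases hc : c = 0
    · subst hc
      refine ⟨fun n => if n = 0 then Set.univ else ∅, ⟨?_, ?_, ?_⟩, ?_⟩
      · intro n; by_cases h : n = 0 <;> simp [h]
      · intro n m hnm
        by_cases hn : n = 0
        · subst hn
          simp [Ne.symm hnm, Function.onFun]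
        · simp [hn, Function.onFun]
      · apply Set.eq_univ_iff_forall.2
        intro x; exact Set.mem_iUnion.2 ⟨0, by simp⟩
      · intro P hP hPf
        refine ⟨fun n _ => ⟨0, fun x _ => by simp⟩, fun s hs => ?_⟩
        constructor
        · simpa using summable_zero
        · simpa using hε
    · obtain ⟨P₀, hP₀, hspec⟩ := h₁ (ε / |c|) (div_pos hε (abs_pos.2 hc))
      refine ⟨P₀, hP₀, ?_⟩
      intro P hP hPf
      obtain ⟨hb, ht⟩ := hspec P hP hPf
      constructor
      · intro n hn
        obtain ⟨M, hM⟩ := hb n hn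
        exact ⟨|c| * M, fun x hx => by
          rw [norm_smul, Real.norm_eq_abs]
          exact mul_le_mul_of_nonneg_left (hM x hx) (abs_nonneg c)⟩
      · intro s hs
        obtain ⟨hS, hd⟩ := ht s hs
        have heq : (fun n => ν (P n) • c • g₁ (s n)) = fun n => c • (ν (P n) • g₁ (s n)) := by
          funext n; rw [smul_comm]
        constructor
        · show Summable (fun n => ‖ν (P n) • c • g₁ (s n)‖)
          have h2 : (fun n => ‖ν (P n) • c • g₁ (s n)‖) =
              fun n => |c| * ‖ν (P n) • g₁ (s n)‖ := by
            funext n; rw [smul_comm, norm_smul, Real.norm_eq_abs]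
          rw [h2]
          exact hS.mul_left _
        · show ‖(∑' n, ν (P n) • c • g₁ (s n)) - c • a₁‖ < ε
          have hv : Summable (fun n => ν (P n) • g₁ (s n)) := Summable.of_norm hS
          have hts : (∑' n, ν (P n) • c • g₁ (s n)) = c • ∑' n, ν (P n) • g₁ (s n) := by
            rw [heq]; exact (hv.hasSum.const_smul c).tsum_eq
          rw [hts, ← smul_sub, norm_smul, Real.norm_eq_abs]
          calc |c| * ‖(∑' n, ν (P n) • g₁ (s n)) - a₁‖
              < |c| * (ε / |c|) := by
                exact mul_lt_mul_of_pos_left hd (abs_pos.2 hc)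
            _ = ε := by field_simp
end

section
/- Let μ be a fuzzy measure (monotone, μ(∅)=0) with μ(S) < ∞, ν of finite variation with ν({0})=0. If f: S → [0,∞) is μ-measurable and f = 0 μ-almost everywhere (there exists E ∈ C with μ(E)=0 and f=0 on S∖E), then f is (ν,μ)-integrable on S and ∫*_S f d(ν,μ) = 0. -/
/-- The set of finite sums `Σ ν(Bᵢ)` over finite pairwise disjoint measurable families
of subsets of `B`. -/
def variationSet {S : Type*} [MeasurableSpace S] (ν : Set S → ℝ) (B : Set S) : Set ℝ :=
  {x | ∃ (n : ℕ) (C : Fin n → Set S), (∀ i, MeasurableSet (C i)) ∧ (∀ i, C i ⊆ B) ∧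
    Pairwise (Function.onFun Disjoint C) ∧ x = ∑ i, ν (C i)}

/-- `u_{f,μ}^A(α) = μ({s ∈ A : f s ≥ α})`, as a function on `[0,∞) ≃ ℝ≥0`. -/
def uFn {S : Type*} (μ : Set S → ℝ) (f : S → ℝ) (A : Set S) : NNReal → ℝ :=
  fun α => μ {s | s ∈ A ∧ (α : ℝ) ≤ f s}

/-- `f` is `(ν,μ)`-integrable on `A` with generalized decomposition integral `c`:
`u_{f,μ}^A` is ν-Riemann–Lebesgue integrable on `[0,∞)` with value `c`. -/
def GRLIntegralOn {S : Type*} [MeasurableSpace S] (ν : Set NNReal → ℝ) (μ : Set S → ℝ)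
    (f : S → ℝ) (A : Set S) (c : ℝ) : Prop :=
  IsRLIntegral ν (uFn μ f A) c

/-- If `μ` is a fuzzy measure, `ν` has finite variation with `ν({0}) = 0`, and `f = 0`
μ-a.e., then `f` is `(ν,μ)`-integrable on `S` with integral `0`. -/
theorem grl_zero_ae {S : Type*} [MeasurableSpace S]
    (μ : Set S → ℝ) (hμ0 : μ ∅ = 0) (hμnn : ∀ A, 0 ≤ μ A)
    (hμmono : ∀ A B : Set S, A ⊆ B → μ A ≤ μ B)
    (ν : Set NNReal → ℝ) (hν0 : ν ∅ = 0) (hνnn : ∀ E, 0 ≤ ν E)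
    (hνzero : ν {0} = 0) (hvar : BddAbove (variationSet ν Set.univ))
    (f : S → ℝ) (hf : Measurable f) (hfnn : ∀ s, 0 ≤ f s)
    (hae : ∃ E : Set S, MeasurableSet E ∧ μ E = 0 ∧ ∀ s ∉ E, f s = 0) :
    GRLIntegralOn ν μ f Set.univ 0 := by
  obtain ⟨E, hEm, hE0, hEf⟩ := hae
  intro ε hε
  refine ⟨fun n => if n = 0 then {0} else if n = 1 then ({0}ᶜ : Set NNReal) else ∅,
    ⟨?_, ?_, ?_⟩, ?_⟩
  · intro n
    dsimp only
    split_ifs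
    · exact measurableSet_singleton 0
    · exact (measurableSet_singleton 0).compl
    · exact MeasurableSet.empty
  · intro n m hnm
    simp only [Function.onFun]
    split_ifs <;> first
      | omega
      | exact disjoint_compl_right
      | exact disjoint_compl_left
      | exact disjoint_bot_left
      | exact disjoint_bot_right
  · ext x
    simp only [Set.mem_iUnion, Set.mem_univ, iff_true]
    by_cases hx : x = 0
    · exact ⟨0, by simp [hx]⟩
    · exact ⟨1, by simp [hx]⟩
  · intro P hP hfin
    constructor
    · intro n _
      refine ⟨μ Set.univ, fun x _ => ?_⟩
      unfold uFn
      rw [Real.norm_eq_abs, abs_of_nonneg (hμnn _)]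
      exact hμmono _ _ (fun s _ => Set.mem_univ s)
    · intro s hs
      have key : ∀ n, ν (P n) • uFn μ f Set.univ (s n) = 0 := by
        intro n
        by_cases hne : (P n).Nonempty
        · obtain ⟨m, hm⟩ := hfin n
          dsimp only at hm
          split_ifs at hm with h1 h2
          · have hPn : P n = {0} := by
              rcases Set.subset_singleton_iff_eq.mp hm with h | h
              · exact absurd h (Set.nonempty_iff_ne_empty.mp hne)
              · exact h
            rw [hPn, hνzero, zero_smul]
          · have hsn : s n ≠ 0 := hm (hs n hne)
            have hpos : (0 : ℝ) < (s n : ℝ) := by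
              exact_mod_cast pos_iff_ne_zero.mpr hsn
            have hsub : {t | t ∈ Set.univ ∧ ((s n : NNReal) : ℝ) ≤ f t} ⊆ E := by
              intro t ht
              by_contra htE
              have := hEf t htE
              linarith [ht.2]
            have hle := hμmono _ _ hsub
            have h0 : uFn μ f Set.univ (s n) = 0 := by
              have := hμnn {t | t ∈ Set.univ ∧ ((s n : NNReal) : ℝ) ≤ f t}
              unfold uFn
              linarith [hle, hE0 ▸ hle]
            rw [h0, smul_zero]
          · exact absurd (Set.subset_empty_iff.mp hm) (Set.nonempty_iff_ne_empty.mp hne)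
        · have hPn : P n = ∅ := Set.not_nonempty_iff_eq_empty.mp hne
          rw [hPn, hν0, zero_smul]
      constructor
      · simp only [key, norm_zero]
        exact summable_zero
      · simp only [key, tsum_zero, sub_zero, norm_zero]
        exact hε
end
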